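/- Let A = E₁ × ⋯ × E_g be a product of g elliptic curves with its natural symmetric principal polarization Θ = ∑ᵢ E₁×⋯×{0ᵢ}×⋯×E_g. For any a ∈ A, the translated divisor t_a*Θ contains at most 2^{2g} − 3^g of the 2^{2g} points of order two of A; in particular there is a point of order two not contained in t_a*Θ. -/
import Mathlib


private lemma key_sub : ∀ B G P Q : ℕ, B + G = P → Q ≤ G → B ≤ P - Q := by omega

/-- Let `A = E₁ × ⋯ × E_g` be a product of `g` elliptic curves
(each modelled as an abelian group whose 2-torsion subgroup has exactly 4
elements), with product theta divisor `Θ = ⋃ᵢ E₁ × ⋯ × {0ᵢ} × ⋯ × E_g`.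
For any `a ∈ A`, the translated divisor `t_a*Θ = {x | x + a ∈ Θ}` contains at
most `2^(2g) − 3^g` of the `2^(2g)` points of order two of `A`; in particular
there exists a point of order two not contained in `t_a*Θ`. -/
theorem two_torsion_off_translated_theta
    {g : ℕ} (hg : 1 ≤ g) (E : Fin g → Type*) [∀ i, AddCommGroup (E i)]
    (htors : ∀ i, Nat.card {x : E i // x + x = 0} = 4)
    (a : ∀ i, E i) :
    Nat.card {x : ∀ i, E i // (x + x = 0) ∧ (∃ i, x i + a i = 0)}
        ≤ 2 ^ (2 * g) - 3 ^ g ∧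
      Nat.card {x : ∀ i, E i // x + x = 0} = 2 ^ (2 * g) ∧
      ∃ x : ∀ i, E i, x + x = 0 ∧ ¬ ∃ i, x i + a i = 0 := by
  classical
  have hfin : ∀ i, Finite {x : E i // x + x = 0} := fun i => by
    have := htors i
    exact (Nat.card_ne_zero.mp (by omega)).2
  -- the total 2-torsion as a Pi type
  have etot : {x : ∀ i, E i // x + x = 0} ≃ ∀ i, {y : E i // y + y = 0} :=
    (Equiv.subtypeEquivRight (fun x => by
      constructor
      · intro h i; exact congrFun h i
      · intro h; funext i; exact h i)).trans (Equiv.subtypePiEquivPi)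
  have hfintot : Finite {x : ∀ i, E i // x + x = 0} := by
    rw [etot.finite_iff]; infer_instance
  have htotcard : Nat.card {x : ∀ i, E i // x + x = 0} = 2 ^ (2 * g) := by
    rw [Nat.card_congr etot, Nat.card_pi]
    simp only [htors]
    rw [Finset.prod_const, Finset.card_univ, Fintype.card_fin,
      show (4:ℕ) = 2 ^ 2 by norm_num, ← pow_mul]
  -- good points: no coordinate hits the divisor
  have egood : {x : ∀ i, E i // x + x = 0 ∧ ∀ i, ¬ (x i + a i = 0)} ≃
      ∀ i, {y : E i // y + y = 0 ∧ ¬ (y + a i = 0)} :=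
    (Equiv.subtypeEquivRight (fun x => by
      constructor
      · rintro ⟨h1, h2⟩ i; exact ⟨congrFun h1 i, h2 i⟩
      · intro h; exact ⟨funext fun i => (h i).1, fun i => (h i).2⟩)).trans
      (Equiv.subtypePiEquivPi)
  -- each coordinate factor of the good set has at least 3 elements
  have hgoodfac : ∀ i, 3 ≤ Nat.card {y : E i // y + y = 0 ∧ ¬ (y + a i = 0)} := by
    intro i
    have := hfin i
    have e : {y : E i // y + y = 0 ∧ ¬ (y + a i = 0)} ≃
        {z : {y : E i // y + y = 0} // ¬ (z.1 + a i = 0)} :=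
      (Equiv.subtypeSubtypeEquivSubtypeInter (fun y : E i => y + y = 0)
        (fun y => ¬ (y + a i = 0))).symm
    rw [Nat.card_congr e]
    have hsplit : Nat.card {z : {y : E i // y + y = 0} // z.1 + a i = 0} +
        Nat.card {z : {y : E i // y + y = 0} // ¬ (z.1 + a i = 0)} =
        Nat.card {y : E i // y + y = 0} := by
      rw [← Nat.card_sum, Nat.card_congr (Equiv.sumCompl _)]
    have hsub : Nat.card {z : {y : E i // y + y = 0} // z.1 + a i = 0} ≤ 1 := by
      have hss : Subsingleton {z : {y : E i // y + y = 0} // z.1 + a i = 0} := by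
        constructor
        rintro ⟨⟨y, hy⟩, hy2⟩ ⟨⟨z, hz⟩, hz2⟩
        have : y = z := add_right_cancel (hy2.trans hz2.symm)
        subst this; rfl
      rcases isEmpty_or_nonempty {z : {y : E i // y + y = 0} // z.1 + a i = 0} with h | h
      · simp [Nat.card_of_isEmpty]
      · obtain ⟨z⟩ := h; rw [Nat.card_of_subsingleton z]
    rw [htors i] at hsplit
    omega
  -- the good set has at least 3^g elements
  have hgoodcard : 3 ^ g ≤
      Nat.card {x : ∀ i, E i // x + x = 0 ∧ ∀ i, ¬ (x i + a i = 0)} := by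
    rw [Nat.card_congr egood, Nat.card_pi]
    calc 3 ^ g = ∏ _i : Fin g, 3 := by
          rw [Finset.prod_const, Finset.card_univ, Fintype.card_fin]
      _ ≤ _ := Finset.prod_le_prod (fun _ _ => by norm_num)
          (fun i _ => hgoodfac i)
  -- split the total 2-torsion into bad and good
  have ebad : {x : ∀ i, E i // x + x = 0 ∧ ∃ i, x i + a i = 0} ≃
      {z : {x : ∀ i, E i // x + x = 0} // ∃ i, z.1 i + a i = 0} :=
    (Equiv.subtypeSubtypeEquivSubtypeInter (fun x : ∀ i, E i => x + x = 0)
      (fun x => ∃ i, x i + a i = 0)).symm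
  have egood' : {x : ∀ i, E i // x + x = 0 ∧ ∀ i, ¬ (x i + a i = 0)} ≃
      {z : {x : ∀ i, E i // x + x = 0} // ¬ ∃ i, z.1 i + a i = 0} :=
    ((Equiv.subtypeEquivRight (fun x => by push_neg; rfl)).trans
      (Equiv.subtypeSubtypeEquivSubtypeInter (fun x : ∀ i, E i => x + x = 0)
        (fun x => ¬ ∃ i, x i + a i = 0)).symm)
  have hsplit : Nat.card {x : ∀ i, E i // x + x = 0 ∧ ∃ i, x i + a i = 0} +
      Nat.card {x : ∀ i, E i // x + x = 0 ∧ ∀ i, ¬ (x i + a i = 0)} =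
      2 ^ (2 * g) := by
    rw [Nat.card_congr ebad, Nat.card_congr egood', ← Nat.card_sum,
      Nat.card_congr (Equiv.sumCompl _), htotcard]
  have hbad : Nat.card {x : ∀ i, E i // x + x = 0 ∧ ∃ i, x i + a i = 0} ≤
      2 ^ (2 * g) - 3 ^ g := key_sub _ _ _ _ hsplit hgoodcard
  refine ⟨hbad, htotcard, ?_⟩
  have hpos : 0 < Nat.card {x : ∀ i, E i // x + x = 0 ∧ ∀ i, ¬ (x i + a i = 0)} :=
    lt_of_lt_of_le (by positivity) hgoodcard
  obtain ⟨⟨x, hx1, hx2⟩⟩ := Nat.card_pos_iff.mp hpos |>.1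
  exact ⟨x, hx1, by push_neg; exact hx2⟩
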